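/- Let β ∈ ℝ₊^{n−1} and μ ∈ ℝ₊ⁿ. Then P^μ_β is monotone: if c ∈ W^μ_β(V) and V' is any profile of the same length as V in which each voter v'ʲ either equals vʲ or is an upranking of candidate c for vʲ, then c ∈ W^μ_β(V'). -/

import Mathlib

open Finset

noncomputable section

/-- `i >_σ j`: candidate `i` is ranked above candidate `j` by `σ`
(where `σ i` is the candidate in position `i`). -/
def prefOver {n : ℕ} (σ : Equiv.Perm (Fin n)) (i j : Fin n) : Prop :=
  σ.symm i < σ.symm j

/-- `M(S,σ)`: the set of `>_σ`-maximal elements of `S` (a singleton when `S ≠ ∅`). -/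
def bestSet {n : ℕ} (σ : Equiv.Perm (Fin n)) (S : Finset (Fin n)) : Finset (Fin n) :=
  S.filter fun x => ∀ y ∈ S, σ.symm x ≤ σ.symm y

/-- `△_S(σ,π) = M(S,σ) △ M(S,π)`. -/
def topDiff {n : ℕ} (σ π : Equiv.Perm (Fin n)) (S : Finset (Fin n)) : Finset (Fin n) :=
  symmDiff (bestSet σ S) (bestSet π S)

/-- The `(β,μ)`-top-difference distance; `β i` is the weight of menus of size `i+2`. -/
def dTD (n : ℕ) (β : Fin (n - 1) → ℝ) (μ : Fin n → ℝ)
    (σ π : Equiv.Perm (Fin n)) : ℝ :=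
  ∑ S ∈ Finset.univ.filter (fun S : Finset (Fin n) => 2 ≤ S.card),
    (if h : S.card - 2 < n - 1 then β ⟨S.card - 2, h⟩ else 0) *
      ∑ x ∈ topDiff σ π S, μ x

def IsSemimetric {α : Type*} (d : α → α → ℝ) : Prop :=
  (∀ x y, 0 ≤ d x y) ∧ (∀ x y, d x y = d y x) ∧ (∀ x, d x x = 0) ∧
    (∀ x y z, d x z ≤ d x y + d y z)

def IsMetricFn {α : Type*} (d : α → α → ℝ) : Prop :=
  IsSemimetric d ∧ ∀ x y, d x y = 0 → x = y

/-- Cumulative distance of `σ` to a profile of voters. -/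
def dProf (n : ℕ) (β : Fin (n - 1) → ℝ) (μ : Fin n → ℝ)
    (σ : Equiv.Perm (Fin n)) (V : List (Equiv.Perm (Fin n))) : ℝ :=
  (V.map (dTD n β μ σ)).sum

/-- The median preference correspondence `P^μ_β`. -/
def Pmed (n : ℕ) (β : Fin (n - 1) → ℝ) (μ : Fin n → ℝ)
    (V : List (Equiv.Perm (Fin n))) : Set (Equiv.Perm (Fin n)) :=
  {σ | ∀ τ : Equiv.Perm (Fin n), dProf n β μ σ V ≤ dProf n β μ τ V}

/-- The winner set `W^μ_β`: candidates ranked first by some consensus ranking. -/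
def Wmed (n : ℕ) (hn : 0 < n) (β : Fin (n - 1) → ℝ) (μ : Fin n → ℝ)
    (V : List (Equiv.Perm (Fin n))) : Set (Fin n) :=
  {c | ∃ σ ∈ Pmed n β μ V, σ ⟨0, hn⟩ = c}

/-- `π` is an upranking of candidate `c` for `σ`. -/
def Uprank {n : ℕ} (c : Fin n) (σ π : Equiv.Perm (Fin n)) : Prop :=
  (∀ i j : Fin n, i ≠ c → j ≠ c → (σ.symm i < σ.symm j ↔ π.symm i < π.symm j)) ∧
    ∃ i : Fin n, i ≠ c ∧ σ.symm i < σ.symm c ∧ π.symm c < π.symm i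

namespace Stmt13Aux

variable {n : ℕ}

def topC (σ : Equiv.Perm (Fin n)) (S : Finset (Fin n)) (hS : S.Nonempty) : Fin n :=
  σ ((S.image σ.symm).min' (hS.image _))

lemma topC_mem (σ : Equiv.Perm (Fin n)) (S : Finset (Fin n)) (hS : S.Nonempty) :
    topC σ S hS ∈ S := by
  have h := Finset.min'_mem (S.image σ.symm) (hS.image _)
  simp only [Finset.mem_image] at h
  obtain ⟨x, hx, hx2⟩ := h
  unfold topC
  rw [← hx2]
  simpa using hx

lemma topC_le (σ : Equiv.Perm (Fin n)) (S : Finset (Fin n)) (hS : S.Nonempty)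
    {y : Fin n} (hy : y ∈ S) : σ.symm (topC σ S hS) ≤ σ.symm y := by
  unfold topC
  rw [Equiv.symm_apply_apply]
  exact Finset.min'_le _ _ (Finset.mem_image_of_mem _ hy)

lemma topC_eq_of (σ : Equiv.Perm (Fin n)) (S : Finset (Fin n)) (hS : S.Nonempty)
    {a : Fin n} (ha : a ∈ S) (h : ∀ y ∈ S, σ.symm a ≤ σ.symm y) :
    topC σ S hS = a :=
  σ.symm.injective (le_antisymm (topC_le σ S hS ha) (h _ (topC_mem σ S hS)))

lemma bestSet_eq (σ : Equiv.Perm (Fin n)) (S : Finset (Fin n)) (hS : S.Nonempty) :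
    bestSet σ S = {topC σ S hS} := by
  ext x
  simp only [bestSet, Finset.mem_filter, Finset.mem_singleton]
  constructor
  · rintro ⟨hx, hmin⟩
    exact (topC_eq_of σ S hS hx hmin).symm
  · rintro rfl
    exact ⟨topC_mem σ S hS, fun y hy => topC_le σ S hS hy⟩

lemma sum_topDiff (σ π : Equiv.Perm (Fin n)) (S : Finset (Fin n)) (hS : S.Nonempty)
    (μ : Fin n → ℝ) :
    ∑ x ∈ topDiff σ π S, μ x =
      if topC σ S hS = topC π S hS then 0
      else μ (topC σ S hS) + μ (topC π S hS) := by
  rw [topDiff, bestSet_eq σ S hS, bestSet_eq π S hS]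
  split_ifs with h
  · rw [h, symmDiff_self]
    simp
  · have hd : Disjoint ({topC σ S hS} : Finset (Fin n)) {topC π S hS} := by
      simp [Finset.disjoint_singleton]
      exact h
    rw [hd.symmDiff_eq_sup]
    have : ({topC σ S hS} : Finset (Fin n)) ⊔ {topC π S hS} = {topC σ S hS, topC π S hS} := rfl
    rw [this, Finset.sum_pair h]

lemma uprank_up {c : Fin n} {v v' : Equiv.Perm (Fin n)} (h : Uprank c v v')
    {j : Fin n} (hj : j ≠ c) (hcj : v.symm c < v.symm j) : v'.symm c < v'.symm j := by
  obtain ⟨hord, i, hic, h1, h2⟩ := h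
  by_contra hcon
  push_neg at hcon
  have hne : v'.symm j ≠ v'.symm c := fun e => hj (v'.symm.injective e)
  have hjc : v'.symm j < v'.symm c := lt_of_le_of_ne hcon hne
  rcases eq_or_ne i j with rfl | hij
  · exact absurd (hjc.trans h2) (lt_irrefl _)
  · have : v.symm i < v.symm j := h1.trans hcj
    have : v'.symm i < v'.symm j := (hord i j hic hj).mp this
    exact absurd ((this.trans hjc).trans h2) (lt_irrefl _)

lemma top_uprank {c : Fin n} {v v' : Equiv.Perm (Fin n)} (h : Uprank c v v')
    (S : Finset (Fin n)) (hS : S.Nonempty) :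
    topC v' S hS = topC v S hS ∨ (c ∈ S ∧ topC v' S hS = c) := by
  by_cases htc : topC v S hS = c
  · left
    rw [htc]
    refine topC_eq_of v' S hS (htc ▸ topC_mem v S hS) ?_
    intro y hy
    rcases eq_or_ne y c with rfl | hyc
    · exact le_rfl
    · have h1 : v.symm c ≤ v.symm y := htc ▸ topC_le v S hS hy
      have h2 : v.symm c ≠ v.symm y := fun e => hyc (v.symm.injective e).symm
      exact (uprank_up h hyc (lt_of_le_of_ne h1 h2)).le
  · by_cases ht' : topC v' S hS = c
    · exact Or.inr ⟨ht' ▸ topC_mem v' S hS, ht'⟩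
    · left
      by_contra hne
      have h1 : v.symm (topC v S hS) < v.symm (topC v' S hS) :=
        lt_of_le_of_ne (topC_le v S hS (topC_mem v' S hS))
          (fun e => hne (v.symm.injective e).symm)
      have h2 : v'.symm (topC v S hS) < v'.symm (topC v' S hS) :=
        (h.1 _ _ htc ht').mp h1
      exact absurd (lt_of_lt_of_le h2 (topC_le v' S hS (topC_mem v S hS))) (lt_irrefl _)

lemma key_ineq (μ : Fin n → ℝ) (hμ : ∀ i, 0 ≤ μ i) (c : Fin n)
    (σ τ v v' : Equiv.Perm (Fin n)) (S : Finset (Fin n)) (hS : S.Nonempty)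
    (hσ : c ∈ S → topC σ S hS = c)
    (hvv' : topC v' S hS = topC v S hS ∨ (c ∈ S ∧ topC v' S hS = c)) :
    (∑ x ∈ topDiff σ v' S, μ x) - (∑ x ∈ topDiff σ v S, μ x) ≤
      (∑ x ∈ topDiff τ v' S, μ x) - (∑ x ∈ topDiff τ v S, μ x) := by
  rw [sum_topDiff σ v' S hS, sum_topDiff σ v S hS, sum_topDiff τ v' S hS,
    sum_topDiff τ v S hS]
  rcases hvv' with ht | ⟨hcS, ht⟩
  · rw [ht]
    simp
  · rw [ht, hσ hcS]
    split_ifs <;> simp_all <;>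
      linarith [hμ (topC v S hS), hμ c, hμ (topC τ S hS)]

end Stmt13Aux

namespace Stmt13Aux

lemma voter_ineq (n : ℕ) (β : Fin (n - 1) → ℝ) (hβ : ∀ k, 0 ≤ β k)
    (μ : Fin n → ℝ) (hμ : ∀ i, 0 ≤ μ i) (c : Fin n)
    (σ τ v v' : Equiv.Perm (Fin n))
    (hσtop : ∀ S (hS : S.Nonempty), c ∈ S → topC σ S hS = c)
    (h : v' = v ∨ Uprank c v v') :
    dTD n β μ σ v' - dTD n β μ σ v ≤ dTD n β μ τ v' - dTD n β μ τ v := by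
  rcases h with rfl | h
  · simp
  · unfold dTD
    rw [← Finset.sum_sub_distrib, ← Finset.sum_sub_distrib]
    apply Finset.sum_le_sum
    intro S hSmem
    rw [Finset.mem_filter] at hSmem
    have hS : S.Nonempty := Finset.card_pos.mp (by omega)
    rw [← mul_sub, ← mul_sub]
    apply mul_le_mul_of_nonneg_left
    · exact key_ineq μ hμ c σ τ v v' S hS (hσtop S hS) (top_uprank h S hS)
    · split_ifs with hh
      · exact hβ _
      · exact le_rfl

lemma prof_ineq (n : ℕ) (β : Fin (n - 1) → ℝ) (hβ : ∀ k, 0 ≤ β k)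
    (μ : Fin n → ℝ) (hμ : ∀ i, 0 ≤ μ i) (c : Fin n)
    (σ τ : Equiv.Perm (Fin n))
    (hσtop : ∀ S (hS : S.Nonempty), c ∈ S → topC σ S hS = c)
    {V V' : List (Equiv.Perm (Fin n))}
    (hVV' : List.Forall₂ (fun v v' => v' = v ∨ Uprank c v v') V V') :
    dProf n β μ σ V' - dProf n β μ σ V ≤ dProf n β μ τ V' - dProf n β μ τ V := by
  induction hVV' with
  | nil => simp [dProf]
  | cons h1 _ ih =>
    simp only [dProf, List.map_cons, List.sum_cons] at *
    have := voter_ineq n β hβ μ hμ c σ τ _ _ hσtop h1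
    linarith

end Stmt13Aux


theorem stmt13 (n : ℕ) (hn : 2 ≤ n) (β : Fin (n - 1) → ℝ) (hβ : ∀ k, 0 ≤ β k)
    (μ : Fin n → ℝ) (hμ : ∀ i, 0 ≤ μ i) (c : Fin n)
    (V V' : List (Equiv.Perm (Fin n)))
    (hVV' : List.Forall₂ (fun v v' => v' = v ∨ Uprank c v v') V V')
    (hc : c ∈ Wmed n (by omega) β μ V) :
    c ∈ Wmed n (by omega) β μ V' := by
  obtain ⟨σ, hσP, hσ0⟩ := hc
  have hσtop : ∀ S (hS : S.Nonempty), c ∈ S → Stmt13Aux.topC σ S hS = c := by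
    intro S hS hcS
    refine Stmt13Aux.topC_eq_of σ S hS hcS ?_
    intro y hy
    have hc0 : σ.symm c = ⟨0, by omega⟩ := by rw [← hσ0]; simp
    rw [hc0]
    exact Fin.mk_le_of_le_val (Nat.zero_le _)
  refine ⟨σ, fun τ => ?_, hσ0⟩
  have h1 := Stmt13Aux.prof_ineq n β hβ μ hμ c σ τ hσtop hVV'
  have h2 := hσP τ
  linarith
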